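/- Let F_25 = F_5(δ) with δ² + 4δ + 2 = 0. Then T² + 4 splits into linear factors over F_25, and the set S_0 = {0, 2δ+4, 4δ+3, δ+2, 3δ+1} ⊆ F_25 satisfies: (1) every root of T² - (δ+2)T lies in S_0; (2) every root of (δ+2)T + 1 lies in S_0; (3) for every γ ∈ S_0, every root of σ_γ(T) = ((δ+2)T + 1)(γ² + 4) - (T² + 4) in an algebraic closure of F_25 lies in S_0. -/

import Mathlib

/-- Over `F_25 = F_5(δ)` with `δ² + 4δ + 2 = 0`, the polynomial `T² + 4` splits over
`F_25`, and `S₀ = {0, 2δ+4, 4δ+3, δ+2, 3δ+1}` contains all roots of `T² - (δ+2)T`,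
all roots of `(δ+2)T + 1`, and all roots of
`σ_γ(T) = ((δ+2)T + 1)(γ²+4) - (T²+4)` for each `γ ∈ S₀`, roots in an algebraic closure. -/
theorem stmt_5 (F : Type*) [Field F] [Fintype F] (hcard : Fintype.card F = 25)
    [CharP F 5] (δ : F) (hδ : δ ^ 2 + 4 * δ + 2 = 0) :
    (Polynomial.X ^ 2 + 4 : Polynomial F).Splits ∧
    (let K := AlgebraicClosure F
     let d : K := algebraMap F K δ
     let S0 : Set K := {0, 2 * d + 4, 4 * d + 3, d + 2, 3 * d + 1}
     (∀ x : K, x ^ 2 - (d + 2) * x = 0 → x ∈ S0) ∧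
     (∀ x : K, (d + 2) * x + 1 = 0 → x ∈ S0) ∧
     (∀ γ ∈ S0, ∀ x : K, ((d + 2) * x + 1) * (γ ^ 2 + 4) - (x ^ 2 + 4) = 0 → x ∈ S0)) := by
  have h5F : (5 : F) = 0 := by exact_mod_cast CharP.cast_eq_zero F 5
  constructor
  · have h5P : (5 : Polynomial F) = 0 := by exact_mod_cast CharP.cast_eq_zero (Polynomial F) 5
    have hfac : (Polynomial.X ^ 2 + 4 : Polynomial F)
        = (Polynomial.X - 1) * (Polynomial.X - 4) := by
      linear_combination (Polynomial.X : Polynomial F) * h5P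
    rw [hfac]
    exact Polynomial.Splits.mul
      (by simpa using Polynomial.Splits.X_sub_C (1 : F))
      (by simpa [map_ofNat] using Polynomial.Splits.X_sub_C (4 : F))
  · intro K d S0
    haveI : CharP K 5 := charP_of_injective_algebraMap (algebraMap F K).injective 5
    have h5 : (5 : K) = 0 := by exact_mod_cast CharP.cast_eq_zero K 5
    have hd : d ^ 2 + 4 * d + 2 = 0 := by
      have := congrArg (algebraMap F K) hδ
      simpa [map_add, map_mul, map_pow, map_ofNat] using this
    have e : d ^ 2 = d + 3 := by linear_combination hd - d * h5 - h5
    have hmem : ∀ y : K, y ∈ S0 ↔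
        y = 0 ∨ y = 2 * d + 4 ∨ y = 4 * d + 3 ∨ y = d + 2 ∨ y = 3 * d + 1 := by
      intro y
      simp only [S0, Set.mem_insert_iff, Set.mem_singleton_iff]
    refine ⟨?_, ?_, ?_⟩
    · intro x hx
      have : x * (x - (d + 2)) = 0 := by linear_combination hx
      rw [hmem]
      rcases mul_eq_zero.mp this with h | h
      · exact Or.inl h
      · exact Or.inr (Or.inr (Or.inr (Or.inl (by linear_combination h))))
    · intro x hx
      have hne : d + 2 ≠ 0 := by
        intro h
        have h2 : (2 : K) = 0 := by linear_combination -hd + (d + 2) * h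
        have : (1 : K) = 0 := by linear_combination h5 - 2 * h2
        exact one_ne_zero this
      have : (d + 2) * x = (d + 2) * (2 * d + 4) := by
        linear_combination hx - 2 * hd - h5
      rw [hmem]
      exact Or.inr (Or.inl (mul_left_cancel₀ hne this))
    · intro γ hγ x hx
      rw [hmem] at hγ
      rw [hmem]
      rcases hγ with rfl | rfl | rfl | rfl | rfl
      · have : x * (x - (4 * d + 3)) = 0 := by
          linear_combination -hx + x * h5
        rcases mul_eq_zero.mp this with h | h
        · exact Or.inl h
        · exact Or.inr (Or.inr (Or.inl (by linear_combination h)))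
      · have : (x - (d + 2)) ^ 2 = 0 := by
          linear_combination -hx + (5 + 28 * x + 4 * d * x) * e
            + (7 + 24 * x + 5 * d + 18 * d * x) * h5
        have h := pow_eq_zero_iff (n := 2) (by norm_num) |>.mp this
        exact Or.inr (Or.inr (Or.inr (Or.inl (by linear_combination h))))
      · have : (x - (3 * d + 1)) ^ 2 = 0 := by
          linear_combination -hx + (25 + 72 * x + 16 * d * x) * e
            + (17 + 48 * x + 11 * d + 35 * d * x) * h5
        have h := pow_eq_zero_iff (n := 2) (by norm_num) |>.mp this
        exact Or.inr (Or.inr (Or.inr (Or.inr (by linear_combination h))))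
      · have : (x - (3 * d + 1)) ^ 2 = 0 := by
          linear_combination -hx + (10 + 7 * x + d * x) * e
            + (7 + 7 * x + 4 * d + 4 * d * x) * h5
        have h := pow_eq_zero_iff (n := 2) (by norm_num) |>.mp this
        exact Or.inr (Or.inr (Or.inr (Or.inr (by linear_combination h))))
      · have : (x - (d + 2)) ^ 2 = 0 := by
          linear_combination -hx + (10 + 33 * x + 9 * d * x) * e
            + (7 + 21 * x + 4 * d + 15 * d * x) * h5
        have h := pow_eq_zero_iff (n := 2) (by norm_num) |>.mp this
        exact Or.inr (Or.inr (Or.inr (Or.inl (by linear_combination h))))
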